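/- arXiv:1606.07243 — 2 statements merged into one kernel-verified Lean document; each statement's English description precedes it below -/
import Mathlib

section
/- Let F ∈ L¹((0,∞); ℂ) and suppose ∫₀^∞ F(t) e^{−μ t} dt = 0 for all μ > 0. Then F = 0 almost everywhere on (0,∞). -/
open MeasureTheory Complex

theorem laplace_transform_injective (F : ℝ → ℂ)
    (hF : IntegrableOn F (Set.Ioi 0))
    (hvanish : ∀ μ : ℝ, 0 < μ →
      (∫ t in Set.Ioi (0:ℝ), F t * Complex.exp (-(μ:ℂ) * t)) = 0) :
    ∀ᵐ t ∂(volume.restrict (Set.Ioi (0:ℝ))), F t = 0 := by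
  set f : ℝ → ℂ := fun t => F t * Complex.exp (-(t:ℂ)) with hf_def
  -- integrability of F times exponential decay
  have hint : ∀ μ : ℝ, 0 < μ →
      IntegrableOn (fun t => F t * Complex.exp (-(μ:ℂ) * t)) (Set.Ioi 0) := by
    intro μ hμ
    apply Integrable.mono' (hF.norm)
    · exact hF.1.mul ((Complex.continuous_exp.comp (by continuity)).aestronglyMeasurable)
    · filter_upwards [ae_restrict_mem measurableSet_Ioi] with t ht
      rw [norm_mul]
      have : ‖Complex.exp (-(μ:ℂ) * t)‖ = Real.exp (-μ * t) := by
        rw [Complex.norm_exp]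
        norm_num
      rw [this]
      nlinarith [Real.exp_le_one_iff.2
          (by have := Set.mem_Ioi.mp ht; nlinarith : -μ * t ≤ 0),
        norm_nonneg (F t), Real.exp_pos (-μ * t)]
  -- key pointwise identity
  have key : ∀ (n : ℕ) (t : ℝ), ((Real.exp (-t) : ℝ) : ℂ)^n * f t
      = F t * Complex.exp (-(((n:ℝ)+1 : ℝ):ℂ) * t) := by
    intro n t
    simp only [hf_def]
    rw [Complex.ofReal_exp]
    rw [← Complex.exp_nat_mul]
    rw [mul_comm, mul_assoc, ← Complex.exp_add]
    congr 1
    push_cast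
    ring_nf
  -- moments vanish
  have hmono : ∀ (c : ℝ) (n : ℕ),
      (∫ t in Set.Ioi (0:ℝ), ((c:ℂ) * ((Real.exp (-t):ℝ):ℂ)^n) * f t) = 0 := by
    intro c n
    have h1 : ∀ t : ℝ, ((c:ℂ) * ((Real.exp (-t):ℝ):ℂ)^n) * f t
        = (c:ℂ) * (F t * Complex.exp (-(((n:ℝ)+1 : ℝ):ℂ) * t)) := by
      intro t; rw [mul_assoc, key]
    simp only [h1]
    rw [integral_const_mul, hvanish ((n:ℝ)+1) (by positivity), mul_zero]
  -- integrability of monomial terms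
  have hmonoint : ∀ (c : ℝ) (n : ℕ),
      IntegrableOn (fun t => ((c:ℂ) * ((Real.exp (-t):ℝ):ℂ)^n) * f t) (Set.Ioi 0) := by
    intro c n
    have h1 : ∀ t : ℝ, ((c:ℂ) * ((Real.exp (-t):ℝ):ℂ)^n) * f t
        = (c:ℂ) * (F t * Complex.exp (-(((n:ℝ)+1 : ℝ):ℂ) * t)) := by
      intro t; rw [mul_assoc, key]
    simp only [h1]
    exact (hint ((n:ℝ)+1) (by positivity)).const_mul _
  -- polynomials vanish
  have hpoly : ∀ p : Polynomial ℝ,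
      (∫ t in Set.Ioi (0:ℝ), ((p.eval (Real.exp (-t)) : ℝ):ℂ) * f t) = 0 := by
    intro p
    have hrw : ∀ t : ℝ, ((p.eval (Real.exp (-t)) : ℝ):ℂ) * f t
        = ∑ i ∈ Finset.range (p.natDegree + 1),
            (((p.coeff i : ℝ):ℂ) * ((Real.exp (-t):ℝ):ℂ)^i) * f t := by
      intro t
      rw [Polynomial.eval_eq_sum_range]
      push_cast
      rw [Finset.sum_mul]
    simp only [hrw]
    rw [integral_finset_sum _ (fun i _ => hmonoint (p.coeff i) i)]
    exact Finset.sum_eq_zero fun i _ => hmono (p.coeff i) i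
  -- exp(-t) lands in [0,1]
  have hmaps : ∀ t ∈ Set.Ioi (0:ℝ), Real.exp (-t) ∈ Set.Icc (0:ℝ) 1 := by
    intro t ht
    exact ⟨(Real.exp_pos _).le, Real.exp_le_one_iff.2 (by simp at ht ⊢; linarith)⟩
  -- integrability for continuous g
  have hcontint : ∀ g : ℝ → ℝ, ContinuousOn g (Set.Icc 0 1) →
      IntegrableOn (fun t => ((g (Real.exp (-t)) : ℝ):ℂ) * f t) (Set.Ioi 0) := by
    intro g hg
    obtain ⟨C, hC⟩ := isCompact_Icc.exists_bound_of_continuousOn hg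
    have hA : AEStronglyMeasurable (fun t => (g (Real.exp (-t)) : ℝ))
        (volume.restrict (Set.Ioi 0)) := by
      apply ContinuousOn.aestronglyMeasurable _ measurableSet_Ioi
      exact hg.comp (Continuous.continuousOn (by continuity)) hmaps
    apply Integrable.mono' ((hF.norm).const_mul C)
    · exact (Complex.continuous_ofReal.comp_aestronglyMeasurable hA).mul
        (hF.1.mul ((Complex.continuous_exp.comp (by continuity)).aestronglyMeasurable))
    · filter_upwards [ae_restrict_mem measurableSet_Ioi] with t ht
      have hmem := hmaps t ht
      have hb := hC _ hmem
      rw [norm_mul, norm_mul]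
      have h1 : ‖((g (Real.exp (-t)) : ℝ):ℂ)‖ = |g (Real.exp (-t))| := by
        rw [Complex.norm_real, Real.norm_eq_abs]
      have h2 : ‖Complex.exp (-(t:ℂ))‖ = Real.exp (-t) := by
        rw [Complex.norm_exp]
        norm_num
      rw [h1, h2]
      have h3 : Real.exp (-t) ≤ 1 := hmem.2
      have h4 : (0:ℝ) < Real.exp (-t) := Real.exp_pos _
      have h5 : |g (Real.exp (-t))| ≤ C := by simpa [Real.norm_eq_abs] using hb
      nlinarith [mul_le_mul_of_nonneg_right h5 (norm_nonneg (F t)),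
        mul_le_mul_of_nonneg_left h3
          (mul_nonneg (abs_nonneg (g (Real.exp (-t)))) (norm_nonneg (F t))),
        norm_nonneg (F t), abs_nonneg (g (Real.exp (-t)))]
  -- continuous functions vanish
  have hcont : ∀ g : ℝ → ℝ, ContinuousOn g (Set.Icc 0 1) →
      (∫ t in Set.Ioi (0:ℝ), ((g (Real.exp (-t)) : ℝ):ℂ) * f t) = 0 := by
    intro g hg
    set I := ∫ t in Set.Ioi (0:ℝ), ((g (Real.exp (-t)) : ℝ):ℂ) * f t with hI_def
    set B := ∫ t in Set.Ioi (0:ℝ), ‖F t‖ with hB_def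
    have hB0 : 0 ≤ B := integral_nonneg fun t => norm_nonneg _
    have key2 : ∀ ε : ℝ, 0 < ε → ‖I‖ ≤ ε * B := by
      intro ε hε
      obtain ⟨p, hp⟩ := exists_polynomial_near_of_continuousOn 0 1 g hg ε hε
      have hgp : ContinuousOn (fun x => g x - p.eval x) (Set.Icc 0 1) :=
        hg.sub ((Polynomial.continuous p).continuousOn)
      have hI : I = ∫ t in Set.Ioi (0:ℝ),
          (((g (Real.exp (-t)) - p.eval (Real.exp (-t)) : ℝ)):ℂ) * f t := by
        have : ∀ t : ℝ, (((g (Real.exp (-t)) - p.eval (Real.exp (-t)) : ℝ)):ℂ) * f t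
            = ((g (Real.exp (-t)) : ℝ):ℂ) * f t
              - ((p.eval (Real.exp (-t)) : ℝ):ℂ) * f t := by
          intro t; push_cast; ring
        simp only [this]
        rw [integral_sub (hcontint g hg) (hcontint _ ((Polynomial.continuous p).continuousOn)),
          hpoly p, sub_zero]
      rw [hI]
      calc ‖∫ t in Set.Ioi (0:ℝ),
              (((g (Real.exp (-t)) - p.eval (Real.exp (-t)) : ℝ)):ℂ) * f t‖
          ≤ ∫ t in Set.Ioi (0:ℝ),
              ‖(((g (Real.exp (-t)) - p.eval (Real.exp (-t)) : ℝ)):ℂ) * f t‖ :=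
            norm_integral_le_integral_norm _
        _ ≤ ∫ t in Set.Ioi (0:ℝ), ε * ‖F t‖ := by
            apply integral_mono_ae ((hcontint _ hgp).norm) ((hF.norm).const_mul ε)
            filter_upwards [ae_restrict_mem measurableSet_Ioi] with t ht
            have hmem := hmaps t ht
            have hb := (hp _ hmem).le
            rw [norm_mul]
            have h1 : ‖(((g (Real.exp (-t)) - p.eval (Real.exp (-t)) : ℝ)):ℂ)‖
                = |g (Real.exp (-t)) - p.eval (Real.exp (-t))| := by
              rw [Complex.norm_real, Real.norm_eq_abs]
            have h2 : ‖f t‖ = ‖F t‖ * Real.exp (-t) := by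
              simp only [hf_def]
              rw [norm_mul]
              congr 1
              rw [Complex.norm_exp]
              norm_num
            rw [h1, h2]
            have h3 : Real.exp (-t) ≤ 1 := hmem.2
            have h4 : (0:ℝ) < Real.exp (-t) := Real.exp_pos _
            have h5 : |g (Real.exp (-t)) - p.eval (Real.exp (-t))| ≤ ε := by
              rw [abs_sub_comm]; exact hb
            nlinarith [mul_le_mul_of_nonneg_right h5 (norm_nonneg (F t)),
              mul_le_mul_of_nonneg_left h3
                (mul_nonneg (abs_nonneg (g (Real.exp (-t)) - p.eval (Real.exp (-t))))
                  (norm_nonneg (F t))),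
              norm_nonneg (F t),
              abs_nonneg (g (Real.exp (-t)) - p.eval (Real.exp (-t)))]
        _ = ε * B := by rw [integral_const_mul]
    have hnorm : ‖I‖ = 0 := by
      by_contra h
      have h0 : 0 < ‖I‖ := lt_of_le_of_ne (norm_nonneg _) (Ne.symm h)
      have hden : (0:ℝ) < 2 * (B + 1) := by linarith
      have := key2 (‖I‖ / (2 * (B + 1))) (div_pos h0 hden)
      have hlt : ‖I‖ / (2 * (B + 1)) * B < ‖I‖ := by
        rw [div_mul_eq_mul_div, div_lt_iff₀ hden]
        nlinarith
      linarith
    exact norm_eq_zero.mp hnorm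
  -- now apply the distribution-theoretic lemma
  have hloc : LocallyIntegrableOn f (Set.Ioi 0) volume := by
    apply IntegrableOn.locallyIntegrableOn
    have := hint 1 one_pos
    simpa [hf_def, Complex.ofReal_one, neg_mul, one_mul] using this
  have hmain := isOpen_Ioi.ae_eq_zero_of_integral_contDiff_smul_eq_zero hloc ?_
  · rw [ae_restrict_iff' measurableSet_Ioi]
    filter_upwards [hmain] with t ht
    intro htmem
    have h0 := ht htmem
    simp only [hf_def] at h0
    rcases mul_eq_zero.mp h0 with h | h
    · exact h
    · exact absurd h (Complex.exp_ne_zero _)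
  · intro ψ hψ hψsupp hψsub
    -- bound on support of ψ
    obtain ⟨M, hM⟩ := hψsupp.isCompact.isBounded.subset_closedBall 0
    set δ : ℝ := Real.exp (-(M + 1)) with hδ_def
    have hδpos : 0 < δ := Real.exp_pos _
    -- define g
    set g : ℝ → ℝ := fun x => if x = 0 then 0 else ψ (-Real.log x) with hg_def
    have hgzero : ∀ x : ℝ, |x| < δ → g x = 0 := by
      intro x hx
      rcases eq_or_ne x 0 with h | h
      · simp [hg_def, h]
      · simp only [hg_def, if_neg h]
        apply image_eq_zero_of_notMem_tsupport
        intro hmem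
        have := hM hmem
        rw [Metric.mem_closedBall, Real.dist_eq, sub_zero] at this
        have hlog : Real.log |x| < -(M + 1) := by
          rw [← Real.log_exp (-(M+1))]
          apply Real.log_lt_log (abs_pos.mpr h)
          exact hx
        rw [Real.log_abs] at hlog
        rw [abs_neg, abs_le] at this
        have := this.1
        linarith
    have hgcont : ContinuousOn g (Set.Icc 0 1) := by
      intro x hx
      rcases eq_or_ne x 0 with h | h
      · subst h
        have hev : g =ᶠ[nhds (0:ℝ)] fun _ => 0 := by
          have : {y : ℝ | |y| < δ} ∈ nhds (0:ℝ) := by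
            have : Metric.ball (0:ℝ) δ ∈ nhds (0:ℝ) := Metric.ball_mem_nhds 0 hδpos
            simpa [Metric.ball, Real.dist_eq] using this
          filter_upwards [this] with y hy
          exact hgzero y hy
        exact (continuousAt_const.congr hev.symm).continuousWithinAt
      · have hx0 : 0 < x := lt_of_le_of_ne hx.1 (Ne.symm h)
        have hca : ContinuousAt (fun y => ψ (-Real.log y)) x :=
          hψ.continuous.continuousAt.comp ((Real.continuousAt_log (ne_of_gt hx0)).neg)
        have hev : g =ᶠ[nhds x] fun y => ψ (-Real.log y) := by
          filter_upwards [eventually_ne_nhds h] with y hy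
          simp [hg_def, hy]
        exact (hca.congr hev.symm).continuousWithinAt
    -- rewrite the integral
    have hsmul : ∀ x : ℝ, ψ x • f x = Set.indicator (Set.Ioi 0)
        (fun x => ((g (Real.exp (-x)) : ℝ):ℂ) * f x) x := by
      intro x
      rcases lt_or_ge 0 x with h | h
      · rw [Set.indicator_of_mem (Set.mem_Ioi.mpr h)]
        have hne : Real.exp (-x) ≠ 0 := ne_of_gt (Real.exp_pos _)
        simp only [hg_def, if_neg hne, Real.log_exp, neg_neg]
        rw [Complex.real_smul]
      · rw [Set.indicator_of_notMem (by simpa using h)]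
        have : ψ x = 0 := by
          apply image_eq_zero_of_notMem_tsupport
          intro hmem
          have := hψsub hmem
          simp at this
          linarith
        simp [this]
    simp only [hsmul]
    rw [integral_indicator measurableSet_Ioi]
    exact hcont g hgcont
end

section
/- Let T > 0, R > 0 and let Q : ℝ² → ℂ be an essentially bounded measurable function supported in [0,T] × [−R,R]. If the Fourier transform of Q, F Q(ξ₁, ξ₂) = ∫_{ℝ²} Q(t,x₁) e^{−i(ξ₁ t + ξ₂ x₁)} dt dx₁, vanishes on the set {(μ, βμ) : μ ∈ ℝ, β ∈ [1/2, 1]}, then Q = 0 almost everywhere. -/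
open MeasureTheory Complex Filter Topology
open scoped FourierTransform RealInnerProductSpace ContDiff

noncomputable section

namespace FourierVanishAux

variable {T R C : ℝ} {Q : ℝ × ℝ → ℂ}

lemma integrable_mul_cont (hmeas : Measurable Q) (hC : ∀ p, ‖Q p‖ ≤ C)
    (hsupp : Function.support Q ⊆ Set.Icc 0 T ×ˢ Set.Icc (-R) R)
    {h : ℝ × ℝ → ℂ} (hh : Continuous h) :
    Integrable (fun p => Q p * h p) := by
  set s : Set (ℝ × ℝ) := Set.Icc 0 T ×ˢ Set.Icc (-R) R with hs
  have hsc : IsCompact s := isCompact_Icc.prod isCompact_Icc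
  have hsm : MeasurableSet s := measurableSet_Icc.prod measurableSet_Icc
  obtain ⟨M, hM⟩ := hsc.exists_bound_of_continuousOn hh.continuousOn
  have hMC : Integrable (s.indicator fun _ => C * M) := by
    rw [integrable_indicator_iff hsm]
    exact integrableOn_const hsc.measure_lt_top.ne
  refine Integrable.mono' hMC ((hmeas.mul hh.measurable).aestronglyMeasurable)
    (Eventually.of_forall fun p => ?_)
  by_cases hp : p ∈ s
  · rw [Set.indicator_of_mem hp]
    calc ‖Q p * h p‖ = ‖Q p‖ * ‖h p‖ := norm_mul _ _
      _ ≤ C * M := mul_le_mul (hC p) (hM p hp) (norm_nonneg _)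
          ((norm_nonneg (Q p)).trans (hC p))
  · rw [Set.indicator_of_notMem hp]
    have h0 : Q p = 0 := by
      by_contra h0
      exact hp (hsupp h0)
    simp [h0]

lemma differentiable_G (hmeas : Measurable Q) (hC : ∀ p, ‖Q p‖ ≤ C)
    (hsupp : Function.support Q ⊆ Set.Icc 0 T ×ˢ Set.Icc (-R) R) (hR : 0 ≤ R) (μ : ℝ) :
    Differentiable ℂ (fun z : ℂ =>
      ∫ p : ℝ × ℝ, Q p * Complex.exp (-Complex.I * (μ * p.1 + z * p.2))) := by
  intro z₀
  set s : Set (ℝ × ℝ) := Set.Icc 0 T ×ˢ Set.Icc (-R) R with hs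
  have hsm : MeasurableSet s := measurableSet_Icc.prod measurableSet_Icc
  have hsc : IsCompact s := isCompact_Icc.prod isCompact_Icc
  have habs : ∀ p : ℝ × ℝ, p ∈ s → |p.2| ≤ R := by
    intro p hp
    exact abs_le.2 ⟨hp.2.1, hp.2.2⟩
  have hcont : ∀ z : ℂ, Continuous fun p : ℝ × ℝ =>
      Complex.exp (-Complex.I * (μ * p.1 + z * p.2)) := by
    intro z
    apply Complex.continuous_exp.comp
    fun_prop
  have key := hasDerivAt_integral_of_dominated_loc_of_deriv_le
    (F := fun (z : ℂ) (p : ℝ × ℝ) => Q p * Complex.exp (-Complex.I * (μ * p.1 + z * p.2)))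
    (F' := fun (z : ℂ) (p : ℝ × ℝ) =>
      Q p * (Complex.exp (-Complex.I * (μ * p.1 + z * p.2)) * (-Complex.I * p.2)))
    (x₀ := z₀)
    (bound := s.indicator fun _ => C * (Real.exp ((|z₀.im| + 1) * R) * R))
    (s := Metric.ball z₀ 1) (Metric.ball_mem_nhds z₀ zero_lt_one)
    (Eventually.of_forall fun z => (hmeas.mul (hcont z).measurable).aestronglyMeasurable)
    (integrable_mul_cont hmeas hC hsupp (hcont z₀))
    ((hmeas.mul ((hcont z₀).mul (by fun_prop)).measurable).aestronglyMeasurable)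
    ?_ ?_ ?_
  · exact key.2.differentiableAt
  · -- bound
    refine Eventually.of_forall fun p => fun z hz => ?_
    by_cases hp : p ∈ s
    · rw [Set.indicator_of_mem hp]
      have hre : (-Complex.I * (↑μ * ↑p.1 + z * ↑p.2)).re = z.im * p.2 := by
        simp [Complex.mul_re, Complex.add_im, Complex.mul_im]
      have him : |z.im| ≤ |z₀.im| + 1 := by
        have h1 : |z.im - z₀.im| ≤ ‖z - z₀‖ := by
          simpa using Complex.abs_im_le_norm (z - z₀)
        have h2 : ‖z - z₀‖ ≤ 1 := by
          rw [Metric.mem_ball, Complex.dist_eq] at hz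
          exact hz.le
        have h3 : |z.im| - |z₀.im| ≤ |z.im - z₀.im| := abs_sub_abs_le_abs_sub _ _
        linarith
      have hexp : ‖Complex.exp (-Complex.I * (↑μ * ↑p.1 + z * ↑p.2))‖
          ≤ Real.exp ((|z₀.im| + 1) * R) := by
        rw [Complex.norm_exp, hre]
        apply Real.exp_le_exp.2
        calc z.im * p.2 ≤ |z.im * p.2| := le_abs_self _
          _ = |z.im| * |p.2| := abs_mul _ _
          _ ≤ (|z₀.im| + 1) * R := mul_le_mul him (habs p hp) (abs_nonneg _)
              (by positivity)
      calc ‖Q p * (Complex.exp (-Complex.I * (↑μ * ↑p.1 + z * ↑p.2)) * (-Complex.I * ↑p.2))‖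
          = ‖Q p‖ * (‖Complex.exp (-Complex.I * (↑μ * ↑p.1 + z * ↑p.2))‖ * |p.2|) := by
            simp [norm_mul]
        _ ≤ C * (Real.exp ((|z₀.im| + 1) * R) * R) := by
            apply mul_le_mul (hC p) _ (by positivity) ((norm_nonneg (Q p)).trans (hC p))
            exact mul_le_mul hexp (habs p hp) (abs_nonneg _) (Real.exp_nonneg _)
    · rw [Set.indicator_of_notMem hp]
      have h0 : Q p = 0 := by
        by_contra h0
        exact hp (hsupp h0)
      simp [h0]
  · -- bound integrable
    rw [integrable_indicator_iff hsm]
    exact integrableOn_const hsc.measure_lt_top.ne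
  · -- hasDerivAt
    refine Eventually.of_forall fun p => fun z hz => ?_
    have h1 : HasDerivAt (fun z : ℂ => -Complex.I * (↑μ * ↑p.1 + z * ↑p.2))
        (-Complex.I * ↑p.2) z :=
      ((hasDerivAt_mul_const (p.2 : ℂ)).const_add ((μ : ℂ) * ↑p.1)).const_mul (-Complex.I)
    exact (h1.cexp).const_mul (Q p)

lemma key_vanish (hmeas : Measurable Q) (hC : ∀ p, ‖Q p‖ ≤ C)
    (hsupp : Function.support Q ⊆ Set.Icc 0 T ×ˢ Set.Icc (-R) R) (hR : 0 ≤ R)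
    (hvanish : ∀ μ β : ℝ, β ∈ Set.Icc (1/2 : ℝ) 1 →
      (∫ p : ℝ × ℝ, Q p * Complex.exp (-Complex.I * (μ * p.1 + (β * μ) * p.2))) = 0)
    (a b : ℝ) :
    (∫ p : ℝ × ℝ, Q p * Complex.exp (-Complex.I * (a * p.1 + b * p.2))) = 0 := by
  -- Step 1: vanishing for all a ≠ 0
  have step1 : ∀ a b : ℝ, a ≠ 0 →
      (∫ p : ℝ × ℝ, Q p * Complex.exp (-Complex.I * (a * p.1 + b * p.2))) = 0 := by
    intro a b ha
    set G : ℂ → ℂ := fun z =>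
      ∫ p : ℝ × ℝ, Q p * Complex.exp (-Complex.I * (a * p.1 + z * p.2)) with hG
    have hdiff : Differentiable ℂ G := differentiable_G hmeas hC hsupp hR a
    have hA : AnalyticOnNhd ℂ G Set.univ := analyticOnNhd_univ_iff_differentiable.2 hdiff
    -- zeros on sequence accumulating at (a : ℂ)
    set u : ℕ → ℂ := fun n => ((1 - 1 / (n + 2) : ℝ) : ℂ) * (a : ℂ) with hu
    have hβmem : ∀ n : ℕ, (1 - 1 / (n + 2) : ℝ) ∈ Set.Icc (1/2 : ℝ) 1 := by
      intro n
      constructor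
      · have : (1 / (n + 2 : ℝ)) ≤ 1 / 2 := by
          apply div_le_div_of_nonneg_left (by norm_num) (by norm_num)
          · push_cast; linarith [Nat.cast_nonneg (α := ℝ) n]
        linarith
      · have : (0 : ℝ) < 1 / (n + 2) := by positivity
        linarith
    have hu0 : ∀ n, G (u n) = 0 := by
      intro n
      exact hvanish a (1 - 1 / (n + 2)) (hβmem n)
    have hne : ∀ n, u n ≠ (a : ℂ) := by
      intro n h
      have ha' : (a : ℂ) ≠ 0 := Complex.ofReal_ne_zero.2 ha
      have h1 : ((1 - 1 / (n + 2) : ℝ) : ℂ) * (a : ℂ) = 1 * (a : ℂ) := by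
        rw [one_mul]; exact h
      have h2 : ((1 - 1 / (n + 2) : ℝ) : ℂ) = 1 := mul_right_cancel₀ ha' h1
      rw [Complex.ofReal_eq_one] at h2
      have h3 : (0 : ℝ) < 1 / (n + 2) := by positivity
      linarith
    have hlimβ : Tendsto (fun n : ℕ => (1 - 1 / (n + 2) : ℝ)) atTop (𝓝 1) := by
      have h1 : Tendsto (fun n : ℕ => (1 / (n + 2) : ℝ)) atTop (𝓝 0) := by
        have := (tendsto_one_div_add_atTop_nhds_zero_nat (𝕜 := ℝ)).comp (tendsto_add_atTop_nat 1)
        convert this using 2 with n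
        simp [Function.comp]
        push_cast
        ring
      have := h1.const_sub 1
      simpa using this
    have hlim : Tendsto u atTop (𝓝[≠] (a : ℂ)) := by
      apply tendsto_nhdsWithin_of_tendsto_nhds_of_eventually_within
      · have hc := (Complex.continuous_ofReal.tendsto 1).comp hlimβ
        rw [Function.comp_def] at hc
        have hc2 := hc.mul_const (a : ℂ)
        have he : ((1:ℝ):ℂ) * (a:ℂ) = (a:ℂ) := by simp
        rw [he] at hc2
        exact hc2
      · exact Eventually.of_forall fun n => hne n
    have hfreq : ∃ᶠ z in 𝓝[≠] (a : ℂ), G z = 0 :=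
      hlim.frequently (Frequently.of_forall hu0)
    have := hA.eqOn_zero_of_preconnected_of_frequently_eq_zero isPreconnected_univ
      (Set.mem_univ (a : ℂ)) hfreq (Set.mem_univ (b : ℂ))
    simpa [hG] using this
  -- Step 2: continuity in a
  rcases eq_or_ne a 0 with rfl | ha
  · -- continuity argument
    set H : ℝ × ℝ → ℂ := fun w =>
      ∫ p : ℝ × ℝ, Q p * Complex.exp (-Complex.I * (w.1 * p.1 + w.2 * p.2)) with hH
    have hs : MeasurableSet (Set.Icc (0:ℝ) T ×ˢ Set.Icc (-R) R) :=
      measurableSet_Icc.prod measurableSet_Icc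
    have hHcont : Continuous H := by
      apply continuous_of_dominated (bound := (Set.Icc (0:ℝ) T ×ˢ Set.Icc (-R) R).indicator
        fun _ => C)
      · intro w
        refine (hmeas.mul ?_).aestronglyMeasurable
        apply Continuous.measurable
        apply Complex.continuous_exp.comp
        fun_prop
      · intro w
        refine Eventually.of_forall fun p => ?_
        by_cases hp : p ∈ Set.Icc (0:ℝ) T ×ˢ Set.Icc (-R) R
        · rw [Set.indicator_of_mem hp]
          have hre : (-Complex.I * (↑w.1 * ↑p.1 + ↑w.2 * ↑p.2)).re = 0 := by
            simp [Complex.mul_re, Complex.add_im, Complex.mul_im]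
          calc ‖Q p * Complex.exp (-Complex.I * (↑w.1 * ↑p.1 + ↑w.2 * ↑p.2))‖
              = ‖Q p‖ * 1 := by
                rw [norm_mul, Complex.norm_exp, hre,
                  Real.exp_zero]
            _ ≤ C := by rw [mul_one]; exact hC p
        · rw [Set.indicator_of_notMem hp]
          have h0 : Q p = 0 := by
            by_contra h0
            exact hp (hsupp h0)
          simp [h0]
      · rw [integrable_indicator_iff hs]
        exact integrableOn_const (isCompact_Icc.prod isCompact_Icc).measure_lt_top.ne
      · refine Eventually.of_forall fun p => ?_
        apply Continuous.mul continuous_const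
        apply Complex.continuous_exp.comp
        fun_prop
    have hlim : Tendsto (fun n : ℕ => ((1 / (n + 1) : ℝ), b)) atTop (𝓝 ((0:ℝ), b)) := by
      exact (tendsto_one_div_add_atTop_nhds_zero_nat (𝕜 := ℝ)).prodMk_nhds tendsto_const_nhds
    have h1 : Tendsto (fun n : ℕ => H ((1 / (n + 1) : ℝ), b)) atTop (𝓝 (H (0, b))) :=
      (hHcont.tendsto _).comp hlim
    have h2 : ∀ n : ℕ, H ((1 / (n + 1) : ℝ), b) = 0 := by
      intro n
      exact step1 _ b (by positivity)
    have h3 : Tendsto (fun _ : ℕ => (0:ℂ)) atTop (𝓝 (H (0, b))) := Tendsto.congr h2 h1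
    have : H (0, b) = 0 := tendsto_nhds_unique h3 tendsto_const_nhds
    simpa [hH] using this
  · exact step1 a b ha

abbrev E2 := EuclideanSpace ℝ (Fin 2)

/-- A smooth compactly supported function is a Schwartz function. -/
def toSchwartz (g : E2 → ℂ) (hg : ContDiff ℝ ∞ g) (hgs : HasCompactSupport g) :
    SchwartzMap E2 ℂ where
  toFun := g
  smooth' := hg
  decay' := by
    intro k n
    have h1 : Continuous fun x : E2 => ‖x‖ ^ k * ‖iteratedFDeriv ℝ n g x‖ :=
      ((continuous_norm.pow k).mul (hg.continuous_iteratedFDeriv (by exact_mod_cast le_top)).norm)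
    have h2 : HasCompactSupport fun x : E2 => ‖x‖ ^ k * ‖iteratedFDeriv ℝ n g x‖ := by
      have := (hgs.iteratedFDeriv (𝕜 := ℝ) n).norm
      exact this.mul_left
    obtain ⟨C, hC⟩ := h1.bounded_above_of_compact_support h2
    exact ⟨C, fun x => le_trans (Real.le_norm_self _) (hC x)⟩

-- the measure-preserving equivalence
def ψm : E2 ≃ᵐ ℝ × ℝ :=
  (MeasurableEquiv.toLp 2 (Fin 2 → ℝ)).symm.trans (MeasurableEquiv.finTwoArrow)

lemma hψ : MeasurePreserving (ψm : E2 → ℝ × ℝ) volume volume :=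
  (volume_preserving_finTwoArrow ℝ).comp (EuclideanSpace.volume_preserving_symm_measurableEquiv_toLp (Fin 2))

lemma ψm_apply (v : E2) : ψm v = (v 0, v 1) := rfl

lemma endgame (Q : ℝ × ℝ → ℂ) (hmeas : Measurable Q) (hQint : Integrable Q)
    (key : ∀ a b : ℝ, (∫ p : ℝ × ℝ, Q p * Complex.exp (-Complex.I * (a * p.1 + b * p.2))) = 0) :
    ∀ᵐ p : ℝ × ℝ, Q p = 0 := by
  set f : E2 → ℂ := Q ∘ ψm with hf
  have hfmeas : Measurable f := hmeas.comp ψm.measurable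
  have hfint : Integrable f := (hψ.integrable_comp_emb ψm.measurableEmbedding).2 hQint
  -- Fourier transform of f vanishes
  have hFf : 𝓕 f = 0 := by
    funext w
    rw [Real.fourier_eq']
    have heq : ∀ v : E2, Complex.exp (((-2 * Real.pi * ⟪v, w⟫) : ℝ) * Complex.I) • f v
        = (fun p : ℝ × ℝ => Q p * Complex.exp (-Complex.I *
            (((2 * Real.pi * w 0 : ℝ) : ℂ) * p.1 + ((2 * Real.pi * w 1 : ℝ) : ℂ) * p.2))) (ψm v) := by
      intro v
      have hinner : ⟪v, w⟫ = v 0 * w 0 + v 1 * w 1 := by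
        simp [PiLp.inner_apply, Fin.sum_univ_two, RCLike.inner_apply, conj_trivial]; ring
      rw [smul_eq_mul, mul_comm, ψm_apply]
      congr 1
      rw [hinner]
      push_cast
      ring
    simp only [Pi.zero_apply]
    calc ∫ v : E2, Complex.exp (((-2 * Real.pi * ⟪v, w⟫ : ℝ) : ℂ) * Complex.I) • f v
        = ∫ v : E2, (fun p : ℝ × ℝ => Q p * Complex.exp (-Complex.I *
            (((2 * Real.pi * w 0 : ℝ) : ℂ) * p.1 + ((2 * Real.pi * w 1 : ℝ) : ℂ) * p.2))) (ψm v) :=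
          integral_congr_ae (Eventually.of_forall heq)
      _ = ∫ p : ℝ × ℝ, Q p * Complex.exp (-Complex.I *
            (((2 * Real.pi * w 0 : ℝ) : ℂ) * p.1 + ((2 * Real.pi * w 1 : ℝ) : ℂ) * p.2)) :=
          hψ.integral_comp ψm.measurableEmbedding (fun p : ℝ × ℝ => Q p * Complex.exp
            (-Complex.I * (((2 * Real.pi * w 0 : ℝ) : ℂ) * p.1 + ((2 * Real.pi * w 1 : ℝ) : ℂ) * p.2)))
      _ = 0 := key _ _
  have hae : ∀ᵐ v : E2, f v = 0 := by
    apply ae_eq_zero_of_integral_contDiff_smul_eq_zero hfint.locallyIntegrable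
    intro g hgsmooth hgsupp
    set gC : E2 → ℂ := fun x => (g x : ℂ) with hgCdef
    have hgCsmooth : ContDiff ℝ ∞ gC := Complex.ofRealCLM.contDiff.comp hgsmooth
    have hgCsupp : HasCompactSupport gC :=
      hgsupp.comp_left (g := Complex.ofReal) Complex.ofReal_zero
    set φ : SchwartzMap E2 ℂ := toSchwartz gC hgCsmooth hgCsupp with hφdef
    set hfun : SchwartzMap E2 ℂ := (SchwartzMap.fourierTransformCLE ℂ (SchwartzMap E2 ℂ)).symm φ with hhdef
    have hFh : 𝓕 ⇑hfun = ⇑φ := by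
      have h1 : ⇑(SchwartzMap.fourierTransformCLE ℂ (SchwartzMap E2 ℂ) hfun) = 𝓕 ⇑hfun := by
        rfl
      rw [← h1, hhdef, (SchwartzMap.fourierTransformCLE ℂ (SchwartzMap E2 ℂ)).apply_symm_apply]
    have hflip : (innerₗ E2).flip = innerₗ E2 := by
      apply LinearMap.ext; intro x; apply LinearMap.ext; intro y
      show ⟪y, x⟫ = ⟪x, y⟫
      exact real_inner_comm x y
    have hmul := VectorFourier.integral_fourierIntegral_smul_eq_flip (L := innerₗ E2)
      (μ := volume) (ν := volume) (f := f) (g := ⇑hfun)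
      Real.continuous_fourierChar continuous_inner hfint hfun.integrable
    rw [hflip] at hmul
    have hL : (∫ ξ : E2, (VectorFourier.fourierIntegral 𝐞 volume (innerₗ E2) f ξ) • hfun ξ) = 0 := by
      have hz : ∀ ξ : E2, VectorFourier.fourierIntegral 𝐞 volume (innerₗ E2) f ξ = 0 :=
        fun ξ => congrFun hFf ξ
      simp [hz]
    rw [hL] at hmul
    have h2 : (∫ x : E2, f x • (VectorFourier.fourierIntegral 𝐞 volume (innerₗ E2) ⇑hfun x))
        = ∫ x : E2, g x • f x := by
      apply integral_congr_ae
      refine Eventually.of_forall fun x => ?_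
      show f x • VectorFourier.fourierIntegral 𝐞 volume (innerₗ E2) (⇑hfun) x = g x • f x
      have h3 : VectorFourier.fourierIntegral 𝐞 volume (innerₗ E2) ⇑hfun x = gC x :=
        congrFun hFh x
      rw [h3, smul_eq_mul, hgCdef]
      simp only [Complex.real_smul]
      ring
    rw [h2] at hmul
    exact hmul.symm
  have h4 : ∀ᵐ y ∂(volume.map (ψm : E2 → ℝ × ℝ)), y ∈ Q ⁻¹' {0} := by
    refine (ae_map_iff ψm.measurable.aemeasurable (hmeas (measurableSet_singleton 0))).2 ?_
    filter_upwards [hae] with v hv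
    exact hv
  rw [hψ.map_eq] at h4
  filter_upwards [h4] with p hp
  simpa using hp

end FourierVanishAux

end

theorem fourier_vanish_on_cone_implies_zero (T R : ℝ) (hT : 0 < T) (hR : 0 < R)
    (Q : ℝ × ℝ → ℂ) (hmeas : Measurable Q)
    (hbdd : ∃ C : ℝ, ∀ p, ‖Q p‖ ≤ C)
    (hsupp : Function.support Q ⊆ Set.Icc 0 T ×ˢ Set.Icc (-R) R)
    (hvanish : ∀ μ β : ℝ, β ∈ Set.Icc (1/2 : ℝ) 1 →
      (∫ p : ℝ × ℝ, Q p * Complex.exp (-Complex.I * (μ * p.1 + (β * μ) * p.2))) = 0) :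
    ∀ᵐ p : ℝ × ℝ, Q p = 0 := by
  obtain ⟨C, hC⟩ := hbdd
  have hQint : Integrable Q := by
    have := FourierVanishAux.integrable_mul_cont hmeas hC hsupp
      (h := fun _ => (1 : ℂ)) continuous_const
    simpa using this
  exact FourierVanishAux.endgame Q hmeas hQint
    (FourierVanishAux.key_vanish hmeas hC hsupp hR.le hvanish)
end
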